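/- Let π : M̃ → M be a C^∞ local diffeomorphism between smooth manifolds which is additionally a topological covering map (IsCoveringMap π), let X be a vector field on M and X̃ a vector field on M̃ that is π-related to X. Suppose X is past-complete, i.e. for every p ∈ M there exists a curve γ : ℝ → M with γ(0) = p which is an integral curve of X on the half-line (−∞, 0]. Then X̃ is past-complete on M̃: for every p̃ ∈ M̃ there exists γ̃ : ℝ → M̃ with γ̃(0) = p̃ which is an integral curve of X̃ on (−∞, 0]. -/

import Mathlib

open Manifold Set
open Topology Filter

def OldIsIntegralCurveOn {E : Type*} [NormedAddCommGroup E] [NormedSpace ℝ E]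
    {H : Type*} [TopologicalSpace H] {I : ModelWithCorners ℝ E H}
    {M : Type*} [TopologicalSpace M] [ChartedSpace H M]
    (γ : ℝ → M) (v : (x : M) → TangentSpace I x) (s : Set ℝ) : Prop :=
  ∀ t ∈ s, HasMFDerivAt 𝓘(ℝ, ℝ) I γ t ((1 : ℝ →L[ℝ] ℝ).smulRight <| v (γ t))

theorem lift_hasMFDerivAt
    {E : Type*} [NormedAddCommGroup E] [NormedSpace ℝ E]
    {H : Type*} [TopologicalSpace H] (I : ModelWithCorners ℝ E H)
    {M : Type*} [TopologicalSpace M] [ChartedSpace H M] [IsManifold I (⊤ : ℕ∞) M]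
    {M' : Type*} [TopologicalSpace M'] [ChartedSpace H M'] [IsManifold I (⊤ : ℕ∞) M']
    (π : M' → M) (hπ : IsLocalDiffeomorph I I (⊤ : ℕ∞) π)
    (X : (x : M) → TangentSpace I x) (X' : (p : M') → TangentSpace I p)
    (hrel : ∀ p : M', mfderiv I I π p (X' p) = X (π p))
    {γ : ℝ → M} {f : ℝ → M'} {u : ℝ}
    (hγu : HasMFDerivAt 𝓘(ℝ, ℝ) I γ u ((1 : ℝ →L[ℝ] ℝ).smulRight (X (γ u))))
    (hfc : ContinuousAt f u) (heq : (π ∘ f) =ᶠ[𝓝 u] γ) :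
    HasMFDerivAt 𝓘(ℝ, ℝ) I f u ((1 : ℝ →L[ℝ] ℝ).smulRight (X' (f u))) := by
  obtain ⟨Φ, hyΦ, hπΦ⟩ := hπ (f u)
  have hyeq : π (f u) = γ u := heq.eq_of_nhds
  have hfu_tgt : γ u ∈ Φ.target := by
    rw [← hyeq, hπΦ hyΦ]
    exact Φ.map_source' hyΦ
  have hfeq : f =ᶠ[𝓝 u] (Φ.invFun ∘ γ) := by
    have h1 : ∀ᶠ v in 𝓝 u, f v ∈ Φ.source := hfc (Φ.open_source.mem_nhds hyΦ)
    filter_upwards [h1, heq] with v hv1 hv2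
    have h2 : Φ (f v) = γ v := by rw [← hπΦ hv1]; exact hv2
    calc f v = Φ.invFun (Φ (f v)) := (Φ.left_inv' hv1).symm
    _ = Φ.invFun (γ v) := by rw [h2]
  have hψdγ : MDifferentiableAt I I Φ.invFun (γ u) := Φ.symm.mdifferentiableAt (by simp) hfu_tgt
  have hcomp : HasMFDerivAt 𝓘(ℝ, ℝ) I (Φ.invFun ∘ γ) u
      ((mfderiv I I Φ.invFun (γ u)).comp ((1 : ℝ →L[ℝ] ℝ).smulRight (X (γ u)))) :=
    (hψdγ.hasMFDerivAt).comp u hγu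
  have hflat : (mfderiv I I Φ.invFun (γ u)).comp ((1 : ℝ →L[ℝ] ℝ).smulRight (X (γ u)))
      = (1 : ℝ →L[ℝ] ℝ).smulRight (mfderiv I I Φ.invFun (γ u) (X (γ u))) := by
    ext r; simp only [ContinuousLinearMap.comp_apply, ContinuousLinearMap.smulRight_apply, map_smul]
  have hπd : MDifferentiableAt I I π (f u) := (hπ (f u)).mdifferentiableAt (by simp)
  have hψdπ : MDifferentiableAt I I Φ.invFun (π (f u)) := by rw [hyeq]; exact hψdγ
  have hid : (Φ.invFun ∘ π : M' → M') =ᶠ[𝓝 (f u)] id := by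
    filter_upwards [Φ.open_source.mem_nhds hyΦ] with v hv
    show Φ.invFun (π v) = v
    rw [hπΦ hv]; exact Φ.left_inv' hv
  have hkey : mfderiv I I Φ.invFun (γ u) (X (γ u)) = X' (f u) := by
    rw [← hyeq]
    have h3 : mfderiv I I (Φ.invFun ∘ π) (f u)
        = ContinuousLinearMap.id ℝ (TangentSpace I (f u)) := by
      rw [hid.mfderiv_eq, mfderiv_id]
    have h4 : mfderiv I I (Φ.invFun ∘ π) (f u)
        = (mfderiv I I Φ.invFun (π (f u))).comp (mfderiv I I π (f u)) :=
      mfderiv_comp (f u) hψdπ hπd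
    rw [← hrel (f u), ← ContinuousLinearMap.comp_apply, ← h4, h3]
    rfl
  have hfinal := hcomp.congr_of_eventuallyEq hfeq
  rw [← hkey]; exact hfinal.congr_mfderiv hflat

/-- **Past-completeness passes to coverings.** If `π : M' → M` is a `C^∞` local diffeomorphism
which is moreover a topological covering map, `X` is a vector field on `M`, `X'` is a vector
field on `M'` that is `π`-related to `X`, and `X` is past-complete (every point lies on a
curve defined and integral on `(-∞, 0]` ending at that point at time `0`),
then `X'` is past-complete on `M'`. -/
theorem past_complete_of_isCoveringMap
    {E : Type*} [NormedAddCommGroup E] [NormedSpace ℝ E]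
    {H : Type*} [TopologicalSpace H] (I : ModelWithCorners ℝ E H)
    {M : Type*} [TopologicalSpace M] [ChartedSpace H M] [IsManifold I (⊤ : ℕ∞) M]
    {M' : Type*} [TopologicalSpace M'] [ChartedSpace H M'] [IsManifold I (⊤ : ℕ∞) M']
    (π : M' → M) (hπ : IsLocalDiffeomorph I I (⊤ : ℕ∞) π) (hcov : IsCoveringMap π)
    (X : (x : M) → TangentSpace I x) (X' : (p : M') → TangentSpace I p)
    (hrel : ∀ p : M', mfderiv I I π p (X' p) = X (π p))
    (hpast : ∀ p : M, ∃ γ : ℝ → M, γ 0 = p ∧ OldIsIntegralCurveOn γ X (Set.Iic 0)) :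
    ∀ p' : M', ∃ γ' : ℝ → M', γ' 0 = p' ∧ OldIsIntegralCurveOn γ' X' (Set.Iic 0) := by
  intro p'
  obtain ⟨γ, hγ0, hγ⟩ := hpast (π p')
  have hγc : ∀ t ∈ Iic (0:ℝ), ContinuousAt γ t := fun t ht => (hγ t ht).continuousAt
  -- `P T` is the statement that there is a lift of `γ` through `p'` integral on `[T, 0]`
  let P : ℝ → Prop := fun T => ∃ c : ℝ → M', c 0 = p'
      ∧ OldIsIntegralCurveOn c X' (Icc T 0) ∧ EqOn (π ∘ c) γ (Icc T 0)
  -- monotonicity of P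
  have hmono : ∀ T T' : ℝ, T ≤ T' → P T → P T' := by
    rintro T T' hTT' ⟨c, hc0, hcInt, hcEq⟩
    exact ⟨c, hc0, fun u hu => hcInt u (Icc_subset_Icc_left hTT' hu), hcEq.mono (Icc_subset_Icc_left hTT')⟩
  -- base case: a short lift near 0 via a local diffeomorphism inverse at p'
  have hbase : ∃ T : ℝ, T < 0 ∧ P T := by
    obtain ⟨Φ, hp'Φ, hπΦ⟩ := hπ p'
    have h0t : γ 0 ∈ Φ.target := by
      rw [hγ0, hπΦ hp'Φ]; exact Φ.map_source' hp'Φ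
    have hev : ∀ᶠ v in 𝓝 (0:ℝ), γ v ∈ Φ.target :=
      hγc 0 self_mem_Iic (Φ.open_target.mem_nhds h0t)
    obtain ⟨ε, hε, hball⟩ := Metric.eventually_nhds_iff.mp hev
    have hV : ∀ v : ℝ, |v| < ε → γ v ∈ Φ.target := by
      intro v hv
      exact hball (by simpa [Real.dist_eq] using hv)
    have hproj : ∀ v : ℝ, |v| < ε → π (Φ.invFun (γ v)) = γ v := by
      intro v hv
      have h1 : Φ.invFun (γ v) ∈ Φ.source := Φ.map_target' (hV v hv)
      rw [hπΦ h1]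
      exact Φ.right_inv' (hV v hv)
    refine ⟨-(ε/2), by linarith, Φ.invFun ∘ γ, ?_, ?_, ?_⟩
    · show Φ.invFun (γ 0) = p'
      rw [hγ0, hπΦ hp'Φ]; exact Φ.left_inv' hp'Φ
    · intro u hu
      have huI : u ∈ Iic (0:ℝ) := hu.2
      have huε : |u| < ε := by
        rw [abs_lt]; constructor <;> [linarith [hu.1]; linarith [hu.2]]
      refine lift_hasMFDerivAt I π hπ X X' hrel (hγ u huI) ?_ ?_
      · exact (Φ.symm.mdifferentiableAt (by simp) (hV u huε)).continuousAt.comp (hγc u huI)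
      · have : Metric.ball u (ε - |u|) ∈ 𝓝 u := Metric.ball_mem_nhds u (by linarith)
        filter_upwards [this] with v hv
        have : |v| < ε := by
          calc |v| ≤ |v - u| + |u| := by simpa using abs_add_le (v - u) u
          _ < ε := by have := Metric.mem_ball.mp hv; rw [Real.dist_eq] at this; linarith
        exact hproj v this
    · intro v hv
      have : |v| < ε := by
        rw [abs_lt]; constructor <;> [linarith [hv.1]; linarith [hv.2]]
      exact hproj v this
  -- extension step: if P holds at points arbitrarily close above t, it holds strictly below t
  have hext : ∀ t : ℝ, t < 0 →
      (∀ ε > 0, ∃ t', P t' ∧ t ≤ t' ∧ t' < t + ε ∧ t' ≤ 0) → ∃ T, T < t ∧ P T := by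
    intro t ht Hyp
    have htI : t ∈ Iic (0:ℝ) := le_of_lt ht
    have hec := hcov (γ t)
    haveI hne : Nonempty (π ⁻¹' {γ t}) := by
      obtain ⟨_, U, hxU, hU, _, H, _⟩ := hec
      obtain ⟨ε, hε, hb⟩ := Metric.eventually_nhds_iff.mp (hγc t htI (hU.mem_nhds hxU))
      obtain ⟨t', ⟨c, _, _, hcEq⟩, htt', ht'ε, ht'0⟩ := Hyp ε hε
      have : π (c t') ∈ U := by
        rw [show π (c t') = γ t' from hcEq ⟨le_refl t', ht'0⟩]
        exact hb (by rw [Real.dist_eq, abs_lt]; constructor <;> linarith)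
      exact ⟨(H ⟨c t', this⟩).2⟩
    set e := hec.toTrivialization with he
    have hxV : γ t ∈ e.baseSet := hec.mem_toTrivialization_baseSet
    have hev : ∀ᶠ v in 𝓝 t, γ v ∈ e.baseSet := hγc t htI (e.open_baseSet.mem_nhds hxV)
    obtain ⟨ε₀, hε₀, hball⟩ := Metric.eventually_nhds_iff.mp hev
    set ε₁ := min ε₀ (-t) with hε₁def
    have hε₁pos : 0 < ε₁ := lt_min hε₀ (by linarith)
    have hε₁t : t + ε₁ ≤ 0 := by
      have := min_le_right ε₀ (-t); simp only [← hε₁def] at this; linarith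
    have hV : ∀ v : ℝ, |v - t| < ε₁ → γ v ∈ e.baseSet := fun v hv =>
      hball (by rw [Real.dist_eq]; exact lt_of_lt_of_le hv (min_le_left _ _))
    obtain ⟨t', ⟨c, hc0, hcInt, hcEq⟩, htt', ht'ε, ht'0⟩ := Hyp ε₁ hε₁pos
    have ht'neg : t' < 0 := lt_of_lt_of_le ht'ε hε₁t
    have ht'V : γ t' ∈ e.baseSet := hV t' (by rw [abs_sub_lt_iff]; constructor <;> linarith)
    have hct'S : c t' ∈ e.source := e.mem_source.mpr
      (by rw [show π (c t') = γ t' from hcEq ⟨le_refl t', le_of_lt ht'neg⟩]; exact ht'V)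
    set i := (e (c t')).2 with hi
    set S : M → M' := fun b => e.toOpenPartialHomeomorph.symm (b, i) with hSdef
    have hSproj : ∀ b ∈ e.baseSet, π (S b) = b := fun b hb =>
      e.proj_symm_apply (e.mem_target.mpr hb)
    have hSc : ∀ b ∈ e.baseSet, ContinuousAt S b := by
      intro b hb
      have h1 : ContinuousAt (e.toOpenPartialHomeomorph.symm) (b, i) :=
        e.toOpenPartialHomeomorph.symm.continuousAt
          (by rw [OpenPartialHomeomorph.symm_source]; exact e.mem_target.mpr hb)
      have h2 : ContinuousAt (fun b : M => (b, i)) b :=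
        (continuous_id.prodMk continuous_const).continuousAt
      exact ContinuousAt.comp (g := e.toOpenPartialHomeomorph.symm) (f := fun b : M => (b, i)) h1 h2
    have hSct' : S (γ t') = c t' := by
      have h1 : e (c t') = (γ t', i) := by
        rw [hi]
        exact Prod.ext (by rw [e.coe_fst hct'S]; exact hcEq ⟨le_refl t', le_of_lt ht'neg⟩) rfl
      show e.toOpenPartialHomeomorph.symm (γ t', i) = c t'
      rw [← h1]
      exact e.toOpenPartialHomeomorph.left_inv hct'S
    set c' : ℝ → M' := fun u => if t' ≤ u then c u else S (γ u) with hc'def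
    have hc'Eq : ∀ v : ℝ, t - ε₁ < v → v ≤ 0 → π (c' v) = γ v := by
      intro v hv1 hv2
      by_cases hvt' : t' ≤ v
      · show π (if t' ≤ v then c v else S (γ v)) = γ v
        rw [if_pos hvt']
        exact hcEq ⟨hvt', hv2⟩
      · show π (if t' ≤ v then c v else S (γ v)) = γ v
        rw [if_neg hvt']
        exact hSproj _ (hV v (by rw [abs_sub_lt_iff]; constructor <;> linarith))
    refine ⟨t - ε₁/2, by linarith, c', ?_, ?_, ?_⟩
    · show (if t' ≤ (0:ℝ) then c 0 else S (γ 0)) = p'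
      rw [if_pos ht'0]; exact hc0
    · -- integral curve on Icc (t - ε₁/2) 0
      intro u hu
      rcases lt_trichotomy u t' with h | h | h
      · -- u < t'
        have huI : u ∈ Iic (0:ℝ) := le_of_lt (lt_trans h ht'neg)
        have huε : |u - t| < ε₁ := by rw [abs_sub_lt_iff]; constructor <;> linarith [hu.1]
        refine lift_hasMFDerivAt I π hπ X X' hrel (hγ u huI) ?_ ?_
        · have h1 : ContinuousAt (S ∘ γ) u := (hSc (γ u) (hV u huε)).comp (hγc u huI)
          apply h1.congr
          filter_upwards [Ioo_mem_nhds (show t - ε₁ < u by linarith [hu.1]) h] with v hv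
          show S (γ v) = (if t' ≤ v then c v else S (γ v))
          rw [if_neg (not_le.mpr hv.2)]
        · filter_upwards [Ioo_mem_nhds (show t - ε₁ < u by linarith [hu.1]) h] with v hv
          exact hc'Eq v hv.1 (by linarith [hv.2])
      · -- u = t'
        subst h
        refine lift_hasMFDerivAt I π hπ X X' hrel (hγ u (le_of_lt ht'neg)) ?_ ?_
        · rw [← continuousWithinAt_univ, ← Iic_union_Ici (a := u)]
          apply ContinuousWithinAt.union
          · have h1 : ContinuousAt (S ∘ γ) u :=
              (hSc (γ u) ht'V).comp (hγc u (le_of_lt ht'neg))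
            apply h1.continuousWithinAt.congr
            · intro v hv
              rcases lt_or_eq_of_le (mem_Iic.mp hv) with hv' | hv'
              · show (if u ≤ v then c v else S (γ v)) = S (γ v)
                rw [if_neg (not_le.mpr hv')]
              · subst hv'
                show (if v ≤ v then c v else S (γ v)) = S (γ v)
                rw [if_pos le_rfl, ← hSct']
            · show (if u ≤ u then c u else S (γ u)) = S (γ u)
              rw [if_pos le_rfl, ← hSct']
          · have h1 : ContinuousAt c u := (hcInt u ⟨le_refl u, le_of_lt ht'neg⟩).continuousAt
            apply h1.continuousWithinAt.congr
            · intro v hv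
              show (if u ≤ v then c v else S (γ v)) = c v
              rw [if_pos (mem_Ici.mp hv)]
            · show (if u ≤ u then c u else S (γ u)) = c u
              rw [if_pos le_rfl]
        · filter_upwards [Ioo_mem_nhds (show t - ε₁ < u by linarith)
            (show u < t + ε₁ by linarith)] with v hv
          exact hc'Eq v hv.1 (by linarith [hv.2, hε₁t])
      · -- u > t'
        have hfeq : c' =ᶠ[𝓝 u] c := by
          filter_upwards [Ioi_mem_nhds h] with v hv
          show (if t' ≤ v then c v else S (γ v)) = c v
          rw [if_pos (le_of_lt hv)]
        have hd := (hcInt u ⟨le_of_lt h, hu.2⟩).congr_of_eventuallyEq hfeq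
        have hcu : c' u = c u := if_pos (le_of_lt h)
        rw [show X' (c' u) = X' (c u) from by rw [hcu]]
        exact hd
    · intro v hv
      exact hc'Eq v (by linarith [hv.1, hε₁pos]) hv.2
  -- P holds for all T ≤ 0, by a connectedness (infimum) argument
  have hall : ∀ T : ℝ, T ≤ 0 → P T := by
    intro T hT
    obtain ⟨T₀, hT₀neg, hPT₀⟩ := hbase
    by_cases hTT₀ : T₀ ≤ T
    · exact hmono T₀ T hTT₀ hPT₀
    push_neg at hTT₀
    set B : Set ℝ := {T' | T ≤ T' ∧ T' ≤ 0 ∧ P T'} with hBdef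
    have hBne : B.Nonempty := ⟨T₀, le_of_lt hTT₀, le_of_lt hT₀neg, hPT₀⟩
    have hBbdd : BddBelow B := ⟨T, fun y hy => hy.1⟩
    set b := sInf B with hbdef
    have hTb : T ≤ b := le_csInf hBne fun y hy => hy.1
    have hbT₀ : b ≤ T₀ := csInf_le hBbdd ⟨le_of_lt hTT₀, le_of_lt hT₀neg, hPT₀⟩
    have hbneg : b < 0 := lt_of_le_of_lt hbT₀ hT₀neg
    have hHyp : ∀ ε > 0, ∃ t', P t' ∧ b ≤ t' ∧ t' < b + ε ∧ t' ≤ 0 := by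
      intro ε hε
      obtain ⟨t', ht'B, ht'lt⟩ := Real.lt_sInf_add_pos hBne hε
      exact ⟨t', ht'B.2.2, csInf_le hBbdd ht'B, ht'lt, ht'B.2.1⟩
    obtain ⟨T', hT'b, hPT'⟩ := hext b hbneg hHyp
    by_cases hc : T ≤ T'
    · exfalso
      have : b ≤ T' := csInf_le hBbdd ⟨hc, le_of_lt (lt_trans hT'b hbneg), hPT'⟩
      linarith
    · push_neg at hc
      exact hmono T' T (le_of_lt hc) hPT'
  -- choose lifts on each `[min T 0, 0]`
  have hallmin : ∀ T : ℝ, ∃ c : ℝ → M', c 0 = p'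
      ∧ OldIsIntegralCurveOn c X' (Icc (min T 0) 0) ∧ EqOn (π ∘ c) γ (Icc (min T 0) 0) :=
    fun T => hall (min T 0) (min_le_right T 0)
  choose cc hcc0 hccInt hccEq using hallmin
  -- uniqueness of lifts: any two of the chosen curves agree on their common domain
  have hUniq : ∀ T1 T2 : ℝ, T1 ≤ T2 → EqOn (cc T1) (cc T2) (Icc (min T2 0) 0) := by
    intro T1 T2 h12
    have hsub : Icc (min T2 0) 0 ⊆ Icc (min T1 0) 0 :=
      Icc_subset_Icc_left (min_le_min h12 le_rfl)
    have hcont1 : ContinuousOn (cc T1) (Icc (min T2 0) 0) := fun v hv =>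
      ((hccInt T1 v (hsub hv)).continuousAt).continuousWithinAt
    have hcont2 : ContinuousOn (cc T2) (Icc (min T2 0) 0) := fun v hv =>
      ((hccInt T2 v hv).continuousAt).continuousWithinAt
    have heq : EqOn (π ∘ cc T1) (π ∘ cc T2) (Icc (min T2 0) 0) := fun v hv => by
      rw [hccEq T1 (hsub hv), hccEq T2 hv]
    have h0mem : (0:ℝ) ∈ Icc (min T2 0) 0 := ⟨min_le_right T2 0, le_refl 0⟩
    exact hcov.eqOn_of_comp_eqOn isPreconnected_Icc hcont1 hcont2 heq h0mem
      (by rw [hcc0 T1, hcc0 T2])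
  -- assemble the final curve
  refine ⟨fun v => if v < 0 then cc (v - 1) v else cc (-1) v, ?_, ?_⟩
  · show (if (0:ℝ) < 0 then cc (0 - 1) 0 else cc (-1) 0) = p'
    rw [if_neg (lt_irrefl 0)]
    exact hcc0 (-1)
  · intro u hu
    rcases lt_or_eq_of_le (mem_Iic.mp hu) with hu0 | hu0
    · -- u < 0
      have hfeq : (fun v => if v < 0 then cc (v - 1) v else cc (-1) v) =ᶠ[𝓝 u] cc (u - 2) := by
        filter_upwards [Ioo_mem_nhds (show u - 1 < u by linarith) hu0] with v hv
        have hv0 : v < 0 := hv.2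
        have h1 : cc (u - 2) v = cc (v - 1) v := by
          have : v ∈ Icc (min (v - 1) 0) 0 :=
            ⟨le_trans (min_le_left _ _) (by linarith), le_of_lt hv0⟩
          exact hUniq (u - 2) (v - 1) (by linarith [hv.1]) this
        rw [if_pos hv0, ← h1]
      have hmem : u ∈ Icc (min (u - 2) 0) 0 :=
        ⟨le_trans (min_le_left _ _) (by linarith), le_of_lt hu0⟩
      have hd := (hccInt (u - 2) u hmem).congr_of_eventuallyEq hfeq
      beta_reduce
      rw [if_pos hu0, ← hUniq (u - 2) (u - 1) (by linarith)
        ⟨le_trans (min_le_left _ _) (by linarith), le_of_lt hu0⟩]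
      exact hd
    · -- u = 0
      subst hu0
      have hfeq : (fun v => if v < 0 then cc (v - 1) v else cc (-1) v) =ᶠ[𝓝 (0:ℝ)] cc (-1) := by
        filter_upwards [Ioo_mem_nhds (show (-1/2:ℝ) < 0 by norm_num)
          (show (0:ℝ) < 1/2 by norm_num)] with v hv
        by_cases hv0 : v < 0
        · have h1 : cc (-2) v = cc (v - 1) v := by
            have : v ∈ Icc (min (v - 1) 0) 0 :=
              ⟨le_trans (min_le_left _ _) (by linarith), le_of_lt hv0⟩
            exact hUniq (-2) (v - 1) (by linarith [hv.1]) this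
          have h2 : cc (-2) v = cc (-1) v := by
            have : v ∈ Icc (min (-1:ℝ) 0) 0 := by
              constructor
              · rw [min_eq_left (by norm_num : (-1:ℝ) ≤ 0)]; linarith [hv.1]
              · exact le_of_lt hv0
            exact hUniq (-2) (-1) (by norm_num) this
          rw [if_pos hv0, ← h1, h2]
        · rw [if_neg hv0]
      have hmem : (0:ℝ) ∈ Icc (min (-1:ℝ) 0) 0 := ⟨min_le_right _ _, le_refl 0⟩
      have hd := (hccInt (-1) 0 hmem).congr_of_eventuallyEq hfeq
      beta_reduce
      rw [if_neg (lt_irrefl (0:ℝ))]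
      exact hd
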